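/- arXiv:2011.02153 — 4 statements merged into one kernel-verified Lean document; each statement's English description precedes it below -/
import Mathlib

section
/- For any convex domain G ⊊ ℝⁿ, the function w_G is a quasi-metric with constant at most √2: w_G(x,y) ≤ √2·(w_G(x,z) + w_G(z,y)) for all x, y, z ∈ G. -/
open Metric Set

variable {E : Type*} [NormedAddCommGroup E] [NormedSpace ℝ E]

/-- Distance to the boundary of `G`. -/
noncomputable def dG (G : Set E) (x : E) : ℝ := Metric.infDist x (frontier G)

/-- The point pair function `p_G`. -/
noncomputable def pG (G : Set E) (x y : E) : ℝ :=
  dist x y / Real.sqrt (dist x y ^ 2 + 4 * dG G x * dG G y)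

/-- The triangular ratio metric `s_G`. -/
noncomputable def sG (G : Set E) (x y : E) : ℝ :=
  dist x y / ⨅ z : frontier G, (dist x (z : E) + dist (z : E) y)

/-- The `j*_G` metric. -/
noncomputable def jG (G : Set E) (x y : E) : ℝ :=
  dist x y / (dist x y + 2 * min (dG G x) (dG G y))

/-- The set `X̃` of points `x̃` with `|x−x̃| = 2 d_G(x)` whose midpoint with `x` lies on `∂G`. -/
def Xt (G : Set E) (x : E) : Set E :=
  {x' | dist x x' = 2 * dG G x ∧ (2⁻¹ : ℝ) • (x + x') ∈ frontier G}

/-- The quasi-metric `w_G` defined for convex domains. -/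
noncomputable def wG (G : Set E) (x y : E) : ℝ :=
  dist x y / min (Metric.infDist x (Xt G y)) (Metric.infDist y (Xt G x))

set_option linter.unusedSectionVars false


section Helpers

variable {F : Type*} [NormedAddCommGroup F] [InnerProductSpace ℝ F]


local notation "⟪" a ", " b "⟫" => @inner ℝ _ _ a b

lemma my_le_infDist {s : Set F} {x : F} {c : ℝ} (hs : s.Nonempty)
    (h : ∀ y ∈ s, c ≤ dist x y) : c ≤ infDist x s := by
  by_contra hc
  push_neg at hc
  obtain ⟨y, hy, hlt⟩ := (infDist_lt_iff hs).1 hc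
  exact absurd (h y hy) (not_le.2 hlt)

/-- Weak supporting-hyperplane property at a nearest boundary point. -/
lemma support_le {G : Set F} (hGconv : Convex ℝ G) {x m g : F}
    (hball : Metric.ball x (dist x m) ⊆ G) (hmG : m ∉ G) (hg : g ∈ G) :
    ⟪g - m, m - x⟫ ≤ 0 := by
  by_contra h
  push_neg at h
  set ε : ℝ := ⟪g - m, m - x⟫ with hε
  have hεpos : 0 < ε := h
  have hmx : m ≠ x := by
    intro hmx
    have hz : ε = 0 := by rw [hε, hmx, sub_self, inner_zero_right]
    linarith
  set d : ℝ := dist x m with hd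
  have hdpos : 0 < d := dist_pos.2 (Ne.symm hmx)
  set t : ℝ := min (1/2) (ε / (‖g - x‖ ^ 2 + 1)) with ht
  have hgx1 : (0:ℝ) < ‖g - x‖ ^ 2 + 1 := by positivity
  have htpos : 0 < t := lt_min (by norm_num) (div_pos hεpos hgx1)
  have ht12 : t ≤ 1/2 := min_le_left _ _
  have htε : t * (‖g - x‖ ^ 2 + 1) ≤ ε := by
    have := min_le_right (1/2) (ε / (‖g - x‖ ^ 2 + 1))
    calc t * (‖g - x‖ ^ 2 + 1) ≤ (ε / (‖g - x‖ ^ 2 + 1)) * (‖g - x‖ ^ 2 + 1) := by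
          apply mul_le_mul_of_nonneg_right this (le_of_lt hgx1)
      _ = ε := by field_simp
  set q : F := (m - x) - t • (g - x) with hq
  have hnormmx : ‖m - x‖ = d := by rw [hd, dist_eq_norm, norm_sub_rev]
  have hinner : ⟪m - x, g - x⟫ = ε + d ^ 2 := by
    have hgx : g - x = (g - m) + (m - x) := by abel
    rw [hgx, inner_add_right, real_inner_comm (g - m) (m - x), ← hε,
      real_inner_self_eq_norm_sq, hnormmx]
  have hqsq : ‖q‖ ^ 2 < ((1 - t) * d) ^ 2 := by
    have hexp : ‖q‖ ^ 2 = d ^ 2 - 2 * (t * (ε + d ^ 2)) + t ^ 2 * ‖g - x‖ ^ 2 := by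
      rw [hq, norm_sub_sq_real, real_inner_smul_right, hinner, hnormmx, norm_smul]
      rw [Real.norm_eq_abs, abs_of_pos htpos]
      ring
    rw [hexp]
    nlinarith [htpos, hdpos, hεpos, sq_nonneg (‖g - x‖), mul_pos htpos hdpos]
  have h1t : (0:ℝ) < 1 - t := by linarith
  have hqnorm : ‖q‖ < (1 - t) * d := by
    have h0 : (0:ℝ) ≤ (1 - t) * d := by positivity
    exact lt_of_pow_lt_pow_left₀ 2 h0 hqsq
  set b : F := (1 - t)⁻¹ • q + x with hb
  have hbball : b ∈ Metric.ball x d := by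
    rw [mem_ball, dist_eq_norm]
    have : b - x = (1 - t)⁻¹ • q := by rw [hb]; abel
    rw [this, norm_smul, Real.norm_eq_abs, abs_of_pos (inv_pos.2 h1t)]
    calc (1 - t)⁻¹ * ‖q‖ < (1 - t)⁻¹ * ((1 - t) * d) := by
          exact mul_lt_mul_of_pos_left hqnorm (inv_pos.2 h1t)
      _ = d := by field_simp
  have hbG : b ∈ G := hball hbball
  have hcombo : (1 - t) • b + t • g = m := by
    rw [hb, smul_add, smul_smul, mul_inv_cancel₀ (ne_of_gt h1t), one_smul, hq]
    module
  exact hmG (hcombo ▸ hGconv hbG hg (le_of_lt h1t) (le_of_lt htpos) (by ring))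

/-- Strict supporting-hyperplane property. -/
lemma support_lt {G : Set F} (hGopen : IsOpen G) (hGconv : Convex ℝ G) {x m g : F}
    (hball : Metric.ball x (dist x m) ⊆ G) (hmG : m ∉ G) (hg : g ∈ G) (hmx : m ≠ x) :
    ⟪g - m, m - x⟫ < 0 := by
  obtain ⟨r, hrpos, hrball⟩ := Metric.isOpen_iff.1 hGopen g hg
  have hnormpos : (0:ℝ) < ‖m - x‖ := by
    rw [norm_pos_iff, sub_ne_zero]; exact hmx
  set c : ℝ := r / (2 * ‖m - x‖) with hc
  have hcpos : 0 < c := by positivity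
  set g' : F := g + c • (m - x) with hg'
  have hg'G : g' ∈ G := by
    apply hrball
    rw [mem_ball, dist_eq_norm]
    have : g' - g = c • (m - x) := by rw [hg']; abel
    rw [this, norm_smul, Real.norm_eq_abs, abs_of_pos hcpos, hc]
    have h2 : r / (2 * ‖m - x‖) * ‖m - x‖ = r / 2 := by field_simp
    rw [h2]; linarith
  have hle := support_le hGconv hball hmG hg'G
  have hexp : ⟪g' - m, m - x⟫ = ⟪g - m, m - x⟫ + c * ‖m - x‖ ^ 2 := by
    have : g' - m = (g - m) + c • (m - x) := by rw [hg']; abel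
    rw [this, inner_add_left, real_inner_smul_left, real_inner_self_eq_norm_sq]
  nlinarith [mul_pos hcpos (pow_pos hnormpos 2)]


end Helpers

section Euc

variable {n : ℕ} {G : Set (EuclideanSpace ℝ (Fin n))}

local notation "𝔼" => EuclideanSpace ℝ (Fin n)

lemma dG_eq (hGopen : IsOpen G) (hGne : G ≠ Set.univ) {x : 𝔼} (hx : x ∈ G) :
    dG G x = infDist x Gᶜ := by
  obtain ⟨m, hmf, hmd⟩ := exists_mem_frontier_infDist_compl_eq_dist hx hGne
  refine le_antisymm ?_ ?_
  · rw [hmd]; exact infDist_le_dist_of_mem hmf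
  · refine infDist_le_infDist_of_subset ?_ ⟨m, hmf⟩
    rw [hGopen.frontier_eq]
    exact fun p hp => hp.2
lemma dG_pos (hGopen : IsOpen G) (hGne : G ≠ Set.univ) {x : 𝔼} (hx : x ∈ G) :
    0 < dG G x := by
  rw [dG_eq hGopen hGne hx]
  exact (hGopen.isClosed_compl.notMem_iff_infDist_pos (nonempty_compl.2 hGne)).1
    (by simp [hx])

lemma ball_dG_subset (hGopen : IsOpen G) (hGne : G ≠ Set.univ) {x : 𝔼} (hx : x ∈ G) :
    ball x (dG G x) ⊆ G := by
  rw [dG_eq hGopen hGne hx]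
  exact ball_infDist_compl_subset

lemma exists_nearest (hGopen : IsOpen G) (hGne : G ≠ Set.univ) {x : 𝔼} (hx : x ∈ G) :
    ∃ m ∈ frontier G, dist x m = dG G x := by
  obtain ⟨m, hmf, hmd⟩ := exists_mem_frontier_infDist_compl_eq_dist hx hGne
  exact ⟨m, hmf, by rw [dG_eq hGopen hGne hx, hmd]⟩

lemma Xt_nonempty (hGopen : IsOpen G) (hGne : G ≠ Set.univ) {x : 𝔼} (hx : x ∈ G) :
    (Xt G x).Nonempty := by
  obtain ⟨m, hmf, hmd⟩ := exists_nearest hGopen hGne hx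
  refine ⟨x + (2:ℝ) • (m - x), ?_, ?_⟩
  · have h1 : x + (2:ℝ) • (m - x) - x = (2:ℝ) • (m - x) := by abel
    rw [dist_eq_norm, ← hmd, dist_eq_norm]
    rw [show x - (x + (2:ℝ) • (m - x)) = (-2:ℝ) • (m - x) by module]
    rw [norm_smul, norm_sub_rev]
    norm_num
  · have : (2⁻¹ : ℝ) • (x + (x + (2:ℝ) • (m - x))) = m := by module
    rw [this]; exact hmf

lemma infDist_Xt_le (hGopen : IsOpen G) (hGne : G ≠ Set.univ) {x : 𝔼} (hx : x ∈ G)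
    (y : 𝔼) : infDist y (Xt G x) ≤ dist x y + 2 * dG G x := by
  obtain ⟨x', hx'⟩ := Xt_nonempty hGopen hGne hx
  calc infDist y (Xt G x) ≤ dist y x' := infDist_le_dist_of_mem hx'
    _ ≤ dist y x + dist x x' := dist_triangle _ _ _
    _ = dist x y + 2 * dG G x := by rw [dist_comm y x, hx'.1]

lemma sqrt_le_dist_Xt (hGopen : IsOpen G) (hGconv : Convex ℝ G) (hGne : G ≠ Set.univ)
    {x y : 𝔼} (hx : x ∈ G) (hy : y ∈ G) {x' : 𝔼} (hx' : x' ∈ Xt G x) :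
    Real.sqrt (dist x y ^ 2 + 4 * dG G x * dG G y) ≤ dist y x' := by
  obtain ⟨hd, hmf⟩ := hx'
  set d : ℝ := dG G x with hdd
  have hdpos : 0 < d := dG_pos hGopen hGne hx
  set m : 𝔼 := (2⁻¹ : ℝ) • (x + x') with hm
  have hmx : m - x = (2⁻¹ : ℝ) • (x' - x) := by rw [hm]; module
  have hnormmx : ‖m - x‖ = d := by
    rw [hmx, norm_smul]
    have : ‖x' - x‖ = 2 * d := by rw [← norm_sub_rev, ← dist_eq_norm, hd]
    rw [this, Real.norm_eq_abs, abs_of_pos (by norm_num : (0:ℝ) < 2⁻¹)]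
    ring
  have hdistxm : dist x m = d := by rw [dist_eq_norm, norm_sub_rev, hnormmx]
  have hball : ball x (dist x m) ⊆ G := by
    rw [hdistxm]; exact ball_dG_subset hGopen hGne hx
  have hmG : m ∉ G := by
    intro hmem
    rw [hGopen.frontier_eq] at hmf
    exact hmf.2 hmem
  have hmnex : m ≠ x := by
    intro h
    rw [h, sub_self, norm_zero] at hnormmx
    exact absurd hnormmx.symm (ne_of_gt hdpos)
  -- strict support at y
  have hyin := support_lt hGopen hGconv hball hmG hy hmnex
  set s : ℝ := inner ℝ (m - y) (m - x) with hs
  have hspos : 0 < s := by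
    have : inner ℝ (y - m) (m - x) = -s := by
      rw [hs, show y - m = -(m - y) by abel, inner_neg_left]
    linarith [hyin, this ▸ hyin]
  -- the point h is outside G
  set hpt : 𝔼 := y + (s / d ^ 2) • (m - x) with hh
  have hhG : hpt ∉ G := by
    intro hmem
    have h2 := support_lt hGopen hGconv hball hmG hmem hmnex
    have : inner ℝ (hpt - m) (m - x) = (0:ℝ) := by
      rw [hh, show y + (s / d ^ 2) • (m - x) - m = (y - m) + (s / d ^ 2) • (m - x) by abel,
        inner_add_left, real_inner_smul_left, real_inner_self_eq_norm_sq, hnormmx,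
        show y - m = -(m - y) by abel, inner_neg_left, ← hs]
      field_simp
      ring
    rw [this] at h2
    exact lt_irrefl 0 h2
  have hdGy : d * dG G y ≤ s := by
    have h1 : dG G y ≤ dist y hpt := by
      rw [dG_eq hGopen hGne hy]
      exact infDist_le_dist_of_mem hhG
    have h2 : dist y hpt = s / d := by
      rw [dist_eq_norm, show y - hpt = -((s / d ^ 2) • (m - x)) by rw [hh]; abel,
        norm_neg, norm_smul, hnormmx, Real.norm_eq_abs, abs_of_pos (by positivity)]
      field_simp
    rw [h2] at h1
    calc d * dG G y ≤ d * (s / d) := by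
          exact mul_le_mul_of_nonneg_left h1 (le_of_lt hdpos)
      _ = s := by field_simp
  -- expand the norm
  have hx'eq : x' = x + (2:ℝ) • (m - x) := by rw [hmx]; module
  have hinner : inner ℝ (y - x) (m - x) = -s + d ^ 2 := by
    rw [show y - x = -(m - y) + (m - x) by abel, inner_add_left, inner_neg_left,
      ← hs, real_inner_self_eq_norm_sq, hnormmx]
  have hkey : dist y x' ^ 2 = dist x y ^ 2 + 4 * s := by
    rw [dist_eq_norm, show y - x' = (y - x) - (2:ℝ) • (m - x) by rw [hx'eq]; abel,
      norm_sub_sq_real, real_inner_smul_right, hinner, norm_smul, hnormmx,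
      Real.norm_eq_abs, dist_comm x y, dist_eq_norm]
    norm_num
    ring
  have hle : dist x y ^ 2 + 4 * dG G x * dG G y ≤ dist y x' ^ 2 := by
    rw [hkey]; nlinarith [hdGy]
  calc Real.sqrt (dist x y ^ 2 + 4 * dG G x * dG G y) ≤ Real.sqrt (dist y x' ^ 2) :=
        Real.sqrt_le_sqrt hle
    _ = dist y x' := Real.sqrt_sq dist_nonneg

end Euc
section JTri

lemma jtri_easy {u v w a c : ℝ} (hc : 0 < c) (hca : c ≤ a)
    (hu : 0 ≤ u) (hv : 0 ≤ v) (hw : 0 ≤ w) (htri : u ≤ v + w) :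
    u / (u + 2 * a) ≤ v / (v + 2 * c) + w / (w + 2 * c) := by
  have h1 : u / (u + 2 * a) ≤ u / (u + 2 * c) := by
    rw [div_le_div_iff₀ (by linarith) (by linarith)]
    nlinarith
  have h2 : u / (u + 2 * c) ≤ (v + w) / ((v + w) + 2 * c) := by
    rw [div_le_div_iff₀ (by linarith) (by linarith)]
    nlinarith
  have h3a : v / ((v + w) + 2 * c) ≤ v / (v + 2 * c) := by
    rw [div_le_div_iff₀ (by linarith) (by linarith)]
    nlinarith
  have h3b : w / ((v + w) + 2 * c) ≤ w / (w + 2 * c) := by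
    rw [div_le_div_iff₀ (by linarith) (by linarith)]
    nlinarith
  have h3 : (v + w) / ((v + w) + 2 * c) ≤ v / (v + 2 * c) + w / (w + 2 * c) := by
    rw [add_div]
    linarith
  linarith

lemma jtri_hard {u v w a m : ℝ} (ha : 0 < a) (hm : 0 < m) (hma : m ≤ a + v)
    (hu : 0 ≤ u) (hv : 0 ≤ v) (hw : 0 ≤ w) (htri : u ≤ v + w) :
    u / (u + 2 * a) ≤ v / (v + 2 * a) + w / (w + 2 * m) := by
  have h1 : u / (u + 2 * a) ≤ (v + w) / ((v + w) + 2 * a) := by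
    rw [div_le_div_iff₀ (by linarith) (by linarith)]
    nlinarith
  have h2 : (v + w) / ((v + w) + 2 * a) - v / (v + 2 * a)
      = 2 * a * w / (((v + w) + 2 * a) * (v + 2 * a)) := by
    field_simp
    ring
  have h3 : 2 * a * w / (((v + w) + 2 * a) * (v + 2 * a)) ≤ w / (w + 2 * (a + v)) := by
    rw [div_le_div_iff₀ (by positivity) (by linarith)]
    nlinarith [mul_nonneg (mul_nonneg hw hv) hv, mul_nonneg (mul_nonneg hw hv) hw]
  have h4 : w / (w + 2 * (a + v)) ≤ w / (w + 2 * m) := by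
    rw [div_le_div_iff₀ (by linarith) (by linarith)]
    nlinarith
  linarith

lemma jtri {u v w A B C : ℝ} (hA : 0 < A) (hB : 0 < B) (hC : 0 < C)
    (hu : 0 ≤ u) (hv : 0 ≤ v) (hw : 0 ≤ w) (htri : u ≤ v + w)
    (hAC : A ≤ C + v) (hCA : C ≤ A + v) (hBC : B ≤ C + w) (hCB : C ≤ B + w) :
    u / (u + 2 * min A B) ≤ v / (v + 2 * min A C) + w / (w + 2 * min C B) := by
  rcases le_total A B with hAB | hBA
  · rw [min_eq_left hAB]
    rcases le_total C A with hCleA | hAleC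
    · rw [min_eq_right hCleA, min_eq_left (le_trans hCleA hAB)]
      exact jtri_easy hC hCleA hu hv hw htri
    · rw [min_eq_left hAleC]
      have hm2 : 0 < min C B := lt_min hC hB
      have hm2a : min C B ≤ A + v := le_trans (min_le_left _ _) hCA
      exact jtri_hard hA hm2 hm2a hu hv hw htri
  · rw [min_eq_right hBA]
    rcases le_total C B with hCleB | hBleC
    · rw [min_eq_left hCleB, min_eq_right (le_trans hCleB hBA)]
      exact jtri_easy hC hCleB hu hv hw htri
    · rw [min_eq_right hBleC]
      have hm1 : 0 < min A C := lt_min hA hC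
      have hm1b : min A C ≤ B + w := le_trans (min_le_right _ _) hCB
      have := jtri_hard hB hm1 hm1b hu hw hv (by linarith)
      linarith

end JTri

section Euc2

variable {n : ℕ} {G : Set (EuclideanSpace ℝ (Fin n))}

local notation "𝔼" => EuclideanSpace ℝ (Fin n)

lemma sqrt_le_infDist_Xt (hGopen : IsOpen G) (hGconv : Convex ℝ G) (hGne : G ≠ Set.univ)
    {x y : 𝔼} (hx : x ∈ G) (hy : y ∈ G) :
    Real.sqrt (dist x y ^ 2 + 4 * dG G x * dG G y) ≤ infDist y (Xt G x) :=
  my_le_infDist (Xt_nonempty hGopen hGne hx)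
    (fun x' hx' => sqrt_le_dist_Xt hGopen hGconv hGne hx hy hx')

lemma sqrt_le_minD (hGopen : IsOpen G) (hGconv : Convex ℝ G) (hGne : G ≠ Set.univ)
    {x y : 𝔼} (hx : x ∈ G) (hy : y ∈ G) :
    Real.sqrt (dist x y ^ 2 + 4 * dG G x * dG G y) ≤
      min (infDist x (Xt G y)) (infDist y (Xt G x)) := by
  refine le_min ?_ (sqrt_le_infDist_Xt hGopen hGconv hGne hx hy)
  have h := sqrt_le_infDist_Xt hGopen hGconv hGne hy hx
  have heq : dist y x ^ 2 + 4 * dG G y * dG G x = dist x y ^ 2 + 4 * dG G x * dG G y := by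
    rw [dist_comm]; ring
  rwa [heq] at h

set_option maxHeartbeats 1000000 in
theorem w_quasi_metric_convex_aux (G : Set 𝔼)
    (hGopen : IsOpen G) (hGconv : Convex ℝ G) (hGnonempty : G.Nonempty)
    (hGne : G ≠ Set.univ)
    (x y z : 𝔼) (hx : x ∈ G) (hy : y ∈ G) (hz : z ∈ G) :
    wG G x y ≤ Real.sqrt 2 * (wG G x z + wG G z y) := by
  have hA : 0 < dG G x := dG_pos hGopen hGne hx
  have hB : 0 < dG G y := dG_pos hGopen hGne hy
  have hC : 0 < dG G z := dG_pos hGopen hGne hz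
  set A := dG G x
  set B := dG G y
  set C := dG G z
  set dxy := dist x y with hdxy
  set dxz := dist x z with hdxz
  set dzy := dist z y with hdzy
  have hdxy0 : 0 ≤ dxy := dist_nonneg
  have hdxz0 : 0 ≤ dxz := dist_nonneg
  have hdzy0 : 0 ≤ dzy := dist_nonneg
  have htri : dxy ≤ dxz + dzy := dist_triangle x z y
  set Pxy := Real.sqrt (dxy ^ 2 + 4 * A * B) with hPxy
  set Pxz := Real.sqrt (dxz ^ 2 + 4 * A * C) with hPxz
  set Pzy := Real.sqrt (dzy ^ 2 + 4 * C * B) with hPzy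
  have hPxy_pos : 0 < Pxy := Real.sqrt_pos.2 (by nlinarith)
  have hPxz_pos : 0 < Pxz := Real.sqrt_pos.2 (by nlinarith)
  have hPzy_pos : 0 < Pzy := Real.sqrt_pos.2 (by nlinarith)
  set Dxy := min (infDist x (Xt G y)) (infDist y (Xt G x)) with hDxy
  set Dxz := min (infDist x (Xt G z)) (infDist z (Xt G x)) with hDxz
  set Dzy := min (infDist z (Xt G y)) (infDist y (Xt G z)) with hDzy
  have hPDxy : Pxy ≤ Dxy := sqrt_le_minD hGopen hGconv hGne hx hy
  have hPDxz : Pxz ≤ Dxz := sqrt_le_minD hGopen hGconv hGne hx hz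
  have hPDzy : Pzy ≤ Dzy := sqrt_le_minD hGopen hGconv hGne hz hy
  have hDxz_pos : 0 < Dxz := lt_of_lt_of_le hPxz_pos hPDxz
  have hDzy_pos : 0 < Dzy := lt_of_lt_of_le hPzy_pos hPDzy
  have hwxy : wG G x y = dxy / Dxy := rfl
  have hwxz : wG G x z = dxz / Dxz := rfl
  have hwzy : wG G z y = dzy / Dzy := rfl
  have hminAB_pos : 0 < min A B := lt_min hA hB
  have hminAC_pos : 0 < min A C := lt_min hA hC
  have hminCB_pos : 0 < min C B := lt_min hC hB
  -- step 1 : wG x y ≤ dxy / Pxy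
  have hstep1 : wG G x y ≤ dxy / Pxy := by
    rw [hwxy]
    gcongr
  -- step 2 : dxy / Pxy ≤ √2 * (dxy / (dxy + 2 * min A B))
  have hstep2 : dxy / Pxy ≤ Real.sqrt 2 * (dxy / (dxy + 2 * min A B)) := by
    have hden : 0 < dxy + 2 * min A B := by linarith
    have hkey : dxy + 2 * min A B ≤ Real.sqrt 2 * Pxy := by
      rw [hPxy, ← Real.sqrt_mul (by norm_num : (0:ℝ) ≤ 2)]
      rw [show dxy + 2 * min A B = Real.sqrt ((dxy + 2 * min A B) ^ 2) from
        (Real.sqrt_sq (by linarith)).symm]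
      apply Real.sqrt_le_sqrt
      have h1 : min A B ≤ A := min_le_left _ _
      have h2 : min A B ≤ B := min_le_right _ _
      nlinarith [sq_nonneg (dxy - 2 * min A B)]
    rw [mul_div_assoc'] -- √2 * dxy / (dxy + 2*min A B)
    rw [div_le_div_iff₀ hPxy_pos hden]
    calc dxy * (dxy + 2 * min A B) ≤ dxy * (Real.sqrt 2 * Pxy) :=
          mul_le_mul_of_nonneg_left hkey hdxy0
      _ = Real.sqrt 2 * dxy * Pxy := by ring
  -- step 3 : triangle inequality for the j-type quantity
  have hACl : A ≤ C + dxz := infDist_le_infDist_add_dist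
  have hCAl : C ≤ A + dxz := by
    have h := infDist_le_infDist_add_dist (x := z) (y := x) (s := frontier G)
    rwa [dist_comm z x] at h
  have hBCl : B ≤ C + dzy := by
    have h := infDist_le_infDist_add_dist (x := y) (y := z) (s := frontier G)
    rwa [dist_comm y z] at h
  have hCBl : C ≤ B + dzy := infDist_le_infDist_add_dist
  have hstep3 : dxy / (dxy + 2 * min A B) ≤
      dxz / (dxz + 2 * min A C) + dzy / (dzy + 2 * min C B) :=
    jtri hA hB hC hdxy0 hdxz0 hdzy0 htri hACl hCAl hBCl hCBl
  -- step 4 : j-type quantities are below wG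
  have hDxz_le : Dxz ≤ dxz + 2 * min A C := by
    rcases le_total A C with hAC | hCA
    · have h1 : infDist z (Xt G x) ≤ dist x z + 2 * A := infDist_Xt_le hGopen hGne hx z
      have : min A C = A := min_eq_left hAC
      rw [this]
      exact le_trans (min_le_right _ _) h1
    · have h1 : infDist x (Xt G z) ≤ dist z x + 2 * C := infDist_Xt_le hGopen hGne hz x
      have : min A C = C := min_eq_right hCA
      rw [this]
      rw [dist_comm z x] at h1
      exact le_trans (min_le_left _ _) h1
  have hDzy_le : Dzy ≤ dzy + 2 * min C B := by
    rcases le_total C B with hCB | hBC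
    · have h1 : infDist y (Xt G z) ≤ dist z y + 2 * C := infDist_Xt_le hGopen hGne hz y
      have : min C B = C := min_eq_left hCB
      rw [this]
      exact le_trans (min_le_right _ _) h1
    · have h1 : infDist z (Xt G y) ≤ dist y z + 2 * B := infDist_Xt_le hGopen hGne hy z
      have : min C B = B := min_eq_right hBC
      rw [this]
      rw [dist_comm y z] at h1
      exact le_trans (min_le_left _ _) h1
  have hstep4 : dxz / (dxz + 2 * min A C) ≤ wG G x z := by
    rw [hwxz, div_le_div_iff₀ (by linarith) hDxz_pos]
    nlinarith [mul_le_mul_of_nonneg_left hDxz_le hdxz0]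
  have hstep5 : dzy / (dzy + 2 * min C B) ≤ wG G z y := by
    rw [hwzy, div_le_div_iff₀ (by linarith) hDzy_pos]
    nlinarith [mul_le_mul_of_nonneg_left hDzy_le hdzy0]
  calc wG G x y ≤ dxy / Pxy := hstep1
    _ ≤ Real.sqrt 2 * (dxy / (dxy + 2 * min A B)) := hstep2
    _ ≤ Real.sqrt 2 * (dxz / (dxz + 2 * min A C) + dzy / (dzy + 2 * min C B)) := by
        apply mul_le_mul_of_nonneg_left hstep3 (Real.sqrt_nonneg 2)
    _ ≤ Real.sqrt 2 * (wG G x z + wG G z y) := by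
        apply mul_le_mul_of_nonneg_left (add_le_add hstep4 hstep5) (Real.sqrt_nonneg 2)

end Euc2

/-- For any convex domain `G ⊊ ℝⁿ`, `w_G` is a quasi-metric with constant at most `√2`. -/
theorem w_quasi_metric_convex (n : ℕ) (G : Set (EuclideanSpace ℝ (Fin n)))
    (hGopen : IsOpen G) (hGconv : Convex ℝ G) (hGnonempty : G.Nonempty)
    (hGne : G ≠ Set.univ)
    (x y z : EuclideanSpace ℝ (Fin n)) (hx : x ∈ G) (hy : y ∈ G) (hz : z ∈ G) :
    wG G x y ≤ Real.sqrt 2 * (wG G x z + wG G z y) := by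
  exact w_quasi_metric_convex_aux G hGopen hGconv hGnonempty hGne x y z hx hy hz
end

section
/- For points x, y ∈ Bⁿ∖{0} with |y| ≤ |x|, one has |y − x̃| ≤ |x − ỹ|, where x̃ = x(2−|x|)/|x| and ỹ = y(2−|y|)/|y|. -/
open Metric Set
open scoped RealInnerProductSpace

/-- For `x, y ∈ Bⁿ ∖ {0}` with `|y| ≤ |x|`, one has `|y − x̃| ≤ |x − ỹ|`, where
`x̃ = x(2−|x|)/|x|`. -/
theorem tilde_dist_le (n : ℕ) (x y : EuclideanSpace ℝ (Fin n))
    (hx : x ∈ Metric.ball (0 : EuclideanSpace ℝ (Fin n)) 1) (hx0 : x ≠ 0)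
    (hy : y ∈ Metric.ball (0 : EuclideanSpace ℝ (Fin n)) 1) (hy0 : y ≠ 0)
    (hle : ‖y‖ ≤ ‖x‖) :
    ‖y - ((2 - ‖x‖) / ‖x‖) • x‖ ≤ ‖x - ((2 - ‖y‖) / ‖y‖) • y‖ := by
  have ha : (0:ℝ) < ‖x‖ := norm_pos_iff.mpr hx0
  have hb : (0:ℝ) < ‖y‖ := norm_pos_iff.mpr hy0
  have ha1 : ‖x‖ < 1 := by simpa using mem_ball_zero_iff.mp hx
  have hb1 : ‖y‖ < 1 := by simpa using mem_ball_zero_iff.mp hy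
  have hcs : (inner ℝ x y : ℝ) ≤ ‖x‖ * ‖y‖ := by
    exact real_inner_le_norm x y
    
  have hca : (0:ℝ) ≤ (2 - ‖x‖) / ‖x‖ := div_nonneg (by linarith) ha.le
  have hcb : (0:ℝ) ≤ (2 - ‖y‖) / ‖y‖ := div_nonneg (by linarith) hb.le
  have hsq : ‖y - ((2 - ‖x‖) / ‖x‖) • x‖ ^ 2 ≤ ‖x - ((2 - ‖y‖) / ‖y‖) • y‖ ^ 2 := by
    rw [norm_sub_sq_real, norm_sub_sq_real, norm_smul, norm_smul,
      real_inner_smul_right, real_inner_smul_right, Real.norm_of_nonneg hca,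
      Real.norm_of_nonneg hcb, real_inner_comm x y]
    have e1 : ((2 - ‖x‖) / ‖x‖ * ‖x‖) = 2 - ‖x‖ := by field_simp
    have e2 : ((2 - ‖y‖) / ‖y‖ * ‖y‖) = 2 - ‖y‖ := by field_simp
    rw [e1, e2]
    set p : ℝ := inner ℝ x y with hp
    have key : (2 - ‖y‖) / ‖y‖ - (2 - ‖x‖) / ‖x‖ = 2 * (‖x‖ - ‖y‖) / (‖x‖ * ‖y‖) := by
      field_simp; ring
    have h3 : ((2 - ‖y‖) / ‖y‖) * p - ((2 - ‖x‖) / ‖x‖) * p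
        = (2 * (‖x‖ - ‖y‖) / (‖x‖ * ‖y‖)) * p := by rw [← sub_mul, key]
    have h1 : (2 * (‖x‖ - ‖y‖) / (‖x‖ * ‖y‖)) * p ≤ 2 * (‖x‖ - ‖y‖) := by
      calc (2 * (‖x‖ - ‖y‖) / (‖x‖ * ‖y‖)) * p
          ≤ (2 * (‖x‖ - ‖y‖) / (‖x‖ * ‖y‖)) * (‖x‖ * ‖y‖) :=
            mul_le_mul_of_nonneg_left hcs (div_nonneg (by linarith) (mul_pos ha hb).le)
        _ = 2 * (‖x‖ - ‖y‖) := div_mul_cancel₀ _ (mul_pos ha hb).ne'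
    nlinarith [h3, h1]
  nlinarith [norm_nonneg (y - ((2 - ‖x‖) / ‖x‖) • x),
    norm_nonneg (x - ((2 - ‖y‖) / ‖y‖) • y), hsq]
end

section
/- For distinct points x, y ∈ B² collinear with the origin, w_{B²}(x,y) = s_{B²}(x,y). In particular, for real −1 < −x < y ≤ x < 1 (with x > 0), s_{B²}(x,y) = (x−y)/(2−(x+y)) = |x−y|/|y−(2−x)| = w_{B²}(x,y). -/
open Metric Set

variable {E : Type*} [NormedAddCommGroup E] [NormedSpace ℝ E]

/-- `x̃ = x(2−|x|)/|x|` for `x ∈ B² ∖ {0}`. -/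
noncomputable def tilde (x : ℂ) : ℂ := (((2 - ‖x‖) / ‖x‖ : ℝ) : ℂ) * x

/-- The quasi-metric `w` of the unit disk. -/
noncomputable def wB (x y : ℂ) : ℝ :=
  if x = 0 then ‖y‖ / (2 - ‖y‖)
  else if y = 0 then ‖x‖ / (2 - ‖x‖)
  else ‖x - y‖ / min (‖x - tilde y‖) (‖y - tilde x‖)

lemma abs_sub_ge' (x z : ℂ) (hz : ‖z‖ = 1) :
    1 - (x.re * z.re + x.im * z.im) ≤ ‖x - z‖ := by
  have hz2 : z.re ^ 2 + z.im ^ 2 = 1 := by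
    have h := Complex.sq_norm z
    rw [hz] at h
    rw [Complex.normSq_apply] at h
    nlinarith
  have hA : (‖x - z‖) ^ 2 = (x.re - z.re) ^ 2 + (x.im - z.im) ^ 2 := by
    rw [Complex.sq_norm, Complex.normSq_apply]
    simp [Complex.sub_re, Complex.sub_im]
    ring
  have hA0 : 0 ≤ ‖x - z‖ := norm_nonneg _
  nlinarith [sq_nonneg (x.re * z.im - x.im * z.re),
    sq_nonneg (‖x - z‖ - (1 - (x.re * z.re + x.im * z.im))),
    sq_nonneg (‖x - z‖ + (1 - (x.re * z.re + x.im * z.im)))]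

lemma sum_dist_ge (x y z : ℂ) (hz : ‖z‖ = 1) :
    2 - ‖x + y‖ ≤ dist x z + dist z y := by
  have h1 := abs_sub_ge' x z hz
  have h2 := abs_sub_ge' y z hz
  have h3 : (x + y).re * z.re + (x + y).im * z.im = ((x + y) * (starRingEnd ℂ) z).re := by
    simp [Complex.mul_re]
  have h4 : ((x + y) * (starRingEnd ℂ) z).re ≤ ‖x + y‖ := by
    calc ((x + y) * (starRingEnd ℂ) z).re ≤ ‖(x + y) * (starRingEnd ℂ) z‖ :=
          Complex.re_le_norm _
      _ = ‖x + y‖ := by rw [norm_mul, Complex.norm_conj, hz, mul_one]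
  have h5 : dist x z = ‖x - z‖ := Complex.dist_eq x z
  have h6 : dist z y = ‖y - z‖ := by
    rw [dist_comm]; exact Complex.dist_eq y z
  simp only [Complex.add_re, Complex.add_im] at h3
  rw [h5, h6]
  nlinarith

/-- Parametrization of points collinear with the origin. -/
lemma param (x y : ℂ) (h : Collinear ℝ ({0, x, y} : Set ℂ)) :
    ∃ (u : ℂ) (a b : ℝ), ‖u‖ = 1 ∧ x = (a : ℂ) * u ∧ y = (b : ℂ) * u := by
  rw [collinear_iff_of_mem (show (0 : ℂ) ∈ ({0, x, y} : Set ℂ) by simp)] at h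
  obtain ⟨v, hv⟩ := h
  obtain ⟨a, ha⟩ := hv x (by simp)
  obtain ⟨b, hb⟩ := hv y (by simp)
  simp only [vadd_eq_add, add_zero] at ha hb
  by_cases hv0 : v = 0
  · subst hv0
    refine ⟨1, 0, 0, by simp, ?_, ?_⟩ <;> simp [ha, hb]
  · have hnv : ‖v‖ ≠ 0 := by simpa using hv0
    refine ⟨((‖v‖)⁻¹ : ℝ) * v, a * ‖v‖, b * ‖v‖, ?_, ?_, ?_⟩
    · rw [norm_mul]
      simp [abs_of_nonneg (norm_nonneg v), inv_mul_cancel₀ hnv]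
    · rw [ha, Complex.real_smul]
      push_cast
      field_simp
      rw [eq_div_iff (show ((‖v‖ : ℝ) : ℂ) ≠ 0 by exact_mod_cast hnv)]
    · rw [hb, Complex.real_smul]
      push_cast
      field_simp
      rw [eq_div_iff (show ((‖v‖ : ℝ) : ℂ) ≠ 0 by exact_mod_cast hnv)]

lemma inf_eq (x y : ℂ) (hx : ‖x‖ < 1) (hy : ‖y‖ < 1)
    (h : Collinear ℝ ({0, x, y} : Set ℂ)) :
    (⨅ z : (frontier (Metric.ball (0 : ℂ) 1) : Set ℂ), (dist x (z : ℂ) + dist (z : ℂ) y)) =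
      2 - ‖x + y‖ := by
  have hfr : (frontier (Metric.ball (0 : ℂ) 1) : Set ℂ) = Metric.sphere (0 : ℂ) 1 :=
    frontier_ball (0 : ℂ) one_ne_zero
  rw [hfr]
  have hne : Nonempty (Metric.sphere (0 : ℂ) 1) := ⟨⟨1, by simp⟩⟩
  obtain ⟨u, a, b, hu, hxu, hyu⟩ := param x y h
  have hax : ‖x‖ = |a| := by rw [hxu, norm_mul, hu, mul_one, Complex.norm_real, Real.norm_eq_abs]
  have hay : ‖y‖ = |b| := by rw [hyu, norm_mul, hu, mul_one, Complex.norm_real, Real.norm_eq_abs]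
  have ha1 : |a| < 1 := hax ▸ hx
  have hb1 : |b| < 1 := hay ▸ hy
  obtain ⟨ha1l, ha1r⟩ := abs_lt.mp ha1
  obtain ⟨hb1l, hb1r⟩ := abs_lt.mp hb1
  have habs : ‖x + y‖ = |a + b| := by
    rw [hxu, hyu]
    rw [show (a : ℂ) * u + (b : ℂ) * u = ((a + b : ℝ) : ℂ) * u by push_cast; ring]
    rw [norm_mul, hu, mul_one, Complex.norm_real, Real.norm_eq_abs]
  apply le_antisymm
  · set ε : ℝ := if 0 ≤ a + b then 1 else -1 with hε
    have hεabs : |ε| = 1 := by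
      rw [hε]; split <;> simp
    have hz0 : ((ε : ℂ) * u) ∈ Metric.sphere (0 : ℂ) 1 := by
      rw [mem_sphere_iff_norm, sub_zero, norm_mul, hu, mul_one,
        Complex.norm_real, Real.norm_eq_abs, hεabs]
    have hbdd : BddBelow (Set.range fun z : (Metric.sphere (0 : ℂ) 1 : Set ℂ) =>
        dist x (z : ℂ) + dist (z : ℂ) y) := by
      refine ⟨0, ?_⟩
      rintro r ⟨z, rfl⟩
      positivity
    calc (⨅ z : (Metric.sphere (0 : ℂ) 1 : Set ℂ), (dist x (z : ℂ) + dist (z : ℂ) y)) ≤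
        dist x ((ε : ℂ) * u) + dist ((ε : ℂ) * u) y := ciInf_le hbdd ⟨_, hz0⟩
      _ = |a - ε| + |ε - b| := by
          rw [Complex.dist_eq, Complex.dist_eq, hxu, hyu,
            show (a : ℂ) * u - (ε : ℂ) * u = ((a - ε : ℝ) : ℂ) * u by push_cast; ring,
            show (ε : ℂ) * u - (b : ℂ) * u = ((ε - b : ℝ) : ℂ) * u by push_cast; ring,
            norm_mul, norm_mul, hu, mul_one, mul_one, Complex.norm_real, Real.norm_eq_abs, Complex.norm_real, Real.norm_eq_abs]
      _ ≤ 2 - ‖x + y‖ := by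
          rw [habs, hε]
          split_ifs with hab
          · rw [abs_of_nonneg hab, abs_of_nonpos (by linarith), abs_of_nonneg (by linarith)]
            ring_nf
            linarith
          · rw [abs_of_neg (not_le.mp hab), abs_of_nonneg (by linarith),
              abs_of_nonpos (by linarith)]
            ring_nf
            linarith
  · apply le_ciInf
    rintro ⟨z, hz⟩
    have hz1 : ‖z‖ = 1 := by
      rw [mem_sphere_iff_norm, sub_zero] at hz
      exact hz
    exact sum_dist_ge x y z hz1

lemma sG_formula (x y : ℂ) (hx : ‖x‖ < 1) (hy : ‖y‖ < 1)
    (h : Collinear ℝ ({0, x, y} : Set ℂ)) :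
    sG (Metric.ball (0 : ℂ) 1) x y = ‖x - y‖ / (2 - ‖x + y‖) := by
  rw [sG, inf_eq x y hx hy h, Complex.dist_eq]

lemma real_min_eq (a b : ℝ) (ha1l : -1 < a) (ha1r : a < 1) (hb1l : -1 < b) (hb1r : b < 1)
    (ha0 : a ≠ 0) (hb0 : b ≠ 0) :
    min |a - (2 - |b|) / |b| * b| |b - (2 - |a|) / |a| * a| = 2 - |a + b| := by
  have key : ∀ c : ℝ, c ≠ 0 → (2 - |c|) / |c| * c = if 0 < c then 2 - c else -(2 + c) := by
    intro c hc
    rcases lt_or_gt_of_ne hc with h | h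
    · rw [if_neg (not_lt.mpr h.le), abs_of_neg h, div_mul_eq_mul_div,
        div_eq_iff (show (-c : ℝ) ≠ 0 by intro h'; apply hc; linarith)]
      ring
    · rw [if_pos h, abs_of_pos h]
      field_simp
  rw [key a ha0, key b hb0]
  rcases lt_or_gt_of_ne ha0 with ha | ha <;> rcases lt_or_gt_of_ne hb0 with hb | hb
  · rw [if_neg (not_lt.mpr ha.le), if_neg (not_lt.mpr hb.le)]
    rw [show a - -(2 + b) = a + b + 2 by ring, show b - -(2 + a) = a + b + 2 by ring]
    rw [abs_of_pos (by linarith), abs_of_neg (by linarith), min_self]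
    ring
  · rw [if_neg (not_lt.mpr ha.le), if_pos hb]
    rw [show a - (2 - b) = -(2 - (a + b)) by ring, show b - -(2 + a) = a + b + 2 by ring,
      abs_neg, abs_of_pos (by linarith), abs_of_pos (by linarith)]
    rcases abs_cases (a + b) with ⟨h1, h2⟩ | ⟨h1, h2⟩ <;> rw [h1]
    · rw [min_eq_left (by linarith)]
    · rw [min_eq_right (by linarith)]
      ring
  · rw [if_pos ha, if_neg (not_lt.mpr hb.le)]
    rw [show a - -(2 + b) = a + b + 2 by ring, show b - (2 - a) = -(2 - (a + b)) by ring,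
      abs_neg, abs_of_pos (by linarith), abs_of_pos (by linarith)]
    rcases abs_cases (a + b) with ⟨h1, h2⟩ | ⟨h1, h2⟩ <;> rw [h1]
    · rw [min_eq_right (by linarith)]
    · rw [min_eq_left (by linarith)]
      ring
  · rw [if_pos ha, if_pos hb]
    rw [show a - (2 - b) = -(2 - (a + b)) by ring, show b - (2 - a) = -(2 - (a + b)) by ring,
      abs_neg, abs_of_pos (by linarith), min_self, abs_of_pos (by linarith)]

lemma wB_formula (x y : ℂ) (hx : ‖x‖ < 1) (hy : ‖y‖ < 1)
    (h : Collinear ℝ ({0, x, y} : Set ℂ)) :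
    wB x y = ‖x - y‖ / (2 - ‖x + y‖) := by
  by_cases hx0 : x = 0
  · subst hx0
    rw [wB, if_pos rfl, zero_sub, zero_add, norm_neg]
  · by_cases hy0 : y = 0
    · subst hy0
      rw [wB, if_neg hx0, if_pos rfl, sub_zero, add_zero]
    · rw [wB, if_neg hx0, if_neg hy0]
      obtain ⟨u, a, b, hu, hxu, hyu⟩ := param x y h
      have hu0 : u ≠ 0 := by
        intro h'; rw [h'] at hu; simp at hu
      have ha0 : a ≠ 0 := by
        intro h'; apply hx0; rw [hxu, h']; simp
      have hb0 : b ≠ 0 := by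
        intro h'; apply hy0; rw [hyu, h']; simp
      have hax : ‖x‖ = |a| := by rw [hxu, norm_mul, hu, mul_one, Complex.norm_real, Real.norm_eq_abs]
      have hay : ‖y‖ = |b| := by rw [hyu, norm_mul, hu, mul_one, Complex.norm_real, Real.norm_eq_abs]
      obtain ⟨ha1l, ha1r⟩ := abs_lt.mp (hax ▸ hx)
      obtain ⟨hb1l, hb1r⟩ := abs_lt.mp (hay ▸ hy)
      have htx : ‖y - tilde x‖ = |b - (2 - |a|) / |a| * a| := by
        rw [tilde, hax, hxu, hyu,
          show (b : ℂ) * u - (((2 - |a|) / |a| : ℝ) : ℂ) * ((a : ℂ) * u) =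
            ((b - (2 - |a|) / |a| * a : ℝ) : ℂ) * u by push_cast; ring,
          norm_mul, hu, mul_one, Complex.norm_real, Real.norm_eq_abs]
      have hty : ‖x - tilde y‖ = |a - (2 - |b|) / |b| * b| := by
        rw [tilde, hay, hxu, hyu,
          show (a : ℂ) * u - (((2 - |b|) / |b| : ℝ) : ℂ) * ((b : ℂ) * u) =
            ((a - (2 - |b|) / |b| * b : ℝ) : ℂ) * u by push_cast; ring,
          norm_mul, hu, mul_one, Complex.norm_real, Real.norm_eq_abs]
      have habs : ‖x + y‖ = |a + b| := by
        rw [hxu, hyu,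
          show (a : ℂ) * u + (b : ℂ) * u = ((a + b : ℝ) : ℂ) * u by push_cast; ring,
          norm_mul, hu, mul_one, Complex.norm_real, Real.norm_eq_abs]
      rw [htx, hty, habs, real_min_eq a b ha1l ha1r hb1l hb1r ha0 hb0]

/-- For distinct `x, y ∈ B²` collinear with the origin, `w_{B²}(x,y) = s_{B²}(x,y)`;
in particular, for real `−1 < −x < y ≤ x < 1`,
`s_{B²}(x,y) = (x−y)/(2−(x+y)) = |x−y|/|y−(2−x)| = w_{B²}(x,y)`. -/
theorem w_eq_s_collinear :
    (∀ x y : ℂ, x ∈ Metric.ball (0 : ℂ) 1 → y ∈ Metric.ball (0 : ℂ) 1 → x ≠ y →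
      Collinear ℝ ({0, x, y} : Set ℂ) →
      wB x y = sG (Metric.ball (0 : ℂ) 1) x y) ∧
    ∀ x y : ℝ, -1 < -x → -x < y → y ≤ x → x < 1 →
      sG (Metric.ball (0 : ℂ) 1) (x : ℂ) (y : ℂ) = (x - y) / (2 - (x + y)) ∧
      (x - y) / (2 - (x + y)) = |x - y| / |y - (2 - x)| ∧
      |x - y| / |y - (2 - x)| = wB (x : ℂ) (y : ℂ) := by
  constructor
  · intro x y hx hy _ hcol
    rw [mem_ball_zero_iff] at hx hy
    rw [wB_formula x y hx hy hcol, sG_formula x y hx hy hcol]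
  · intro x y h1 h2 h3 h4
    have hx0 : 0 < x := by linarith
    have hcol : Collinear ℝ ({0, (x : ℂ), (y : ℂ)} : Set ℂ) := by
      rw [collinear_iff_of_mem (show (0 : ℂ) ∈ ({0, (x : ℂ), (y : ℂ)} : Set ℂ) by simp)]
      refine ⟨1, ?_⟩
      rintro p hp
      rcases hp with rfl | rfl | rfl
      · exact ⟨0, by simp⟩
      · exact ⟨x, by simp [Complex.real_smul]⟩
      · exact ⟨y, by simp [Complex.real_smul]⟩
    have hax : ‖(x : ℂ)‖ < 1 := by
      rw [Complex.norm_real, Real.norm_eq_abs, abs_of_pos hx0]; exact h4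
    have hay : ‖(y : ℂ)‖ < 1 := by
      rw [Complex.norm_real, Real.norm_eq_abs, abs_lt]; constructor <;> linarith
    have hsub : ‖(x : ℂ) - (y : ℂ)‖ = x - y := by
      rw [show (x : ℂ) - (y : ℂ) = ((x - y : ℝ) : ℂ) by push_cast; ring,
        Complex.norm_real, Real.norm_eq_abs, abs_of_nonneg (by linarith)]
    have hadd : ‖(x : ℂ) + (y : ℂ)‖ = x + y := by
      rw [show (x : ℂ) + (y : ℂ) = ((x + y : ℝ) : ℂ) by push_cast; ring,
        Complex.norm_real, Real.norm_eq_abs, abs_of_pos (by linarith)]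
    refine ⟨?_, ?_, ?_⟩
    · rw [sG_formula _ _ hax hay hcol, hsub, hadd]
    · rw [abs_of_nonneg (by linarith : (0:ℝ) ≤ x - y),
        abs_of_neg (by linarith : y - (2 - x) < 0)]
      ring_nf
    · rw [wB_formula _ _ hax hay hcol, hsub, hadd,
        abs_of_nonneg (by linarith : (0:ℝ) ≤ x - y),
        abs_of_neg (by linarith : y - (2 - x) < 0)]
      ring_nf
end

section
/- For points x = h·u' and y = h·v' with u', v' on the unit sphere, angle μ = ∠U'OV' ∈ (0, π), and h = cos(μ/2), one has |x−y| = sin μ and the strict inequality s_{Bⁿ}(x,y) ≤ cos(μ/2) < |x−y| / √(|x−y|² + 4(1−cos(μ/2))²) = p_{Bⁿ}(x,y). -/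
set_option maxHeartbeats 1000000


open Metric Set
open scoped RealInnerProductSpace

variable {E : Type*} [NormedAddCommGroup E] [NormedSpace ℝ E]

/-- Gram determinant of three unit vectors is nonnegative. -/
lemma gram_det_nonneg' {n : ℕ} (u v z : EuclideanSpace ℝ (Fin n))
    (hu : ‖u‖ = 1) (hv : ‖v‖ = 1) (hz : ‖z‖ = 1)
    (hγ : (⟪u, v⟫)^2 < 1) :
    0 ≤ 1 - (⟪u, v⟫)^2 - (⟪u, z⟫)^2 - (⟪v, z⟫)^2
        + 2 * ⟪u, z⟫ * ⟪v, z⟫ * ⟪u, v⟫ := by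
  set γ := ⟪u, v⟫ with hγdef
  set α := ⟪u, z⟫ with hαdef
  set β := ⟪v, z⟫ with hβdef
  have h0 : (0:ℝ) ≤ ‖(1-γ^2) • z - ((α-β*γ) • u + (β-α*γ) • v)‖^2 := sq_nonneg _
  have hexp : ‖(1-γ^2) • z - ((α-β*γ) • u + (β-α*γ) • v)‖^2
      = (1-γ^2) * (1 - γ^2 - α^2 - β^2 + 2*α*β*γ) := by
    rw [← real_inner_self_eq_norm_sq]
    simp only [inner_sub_left, inner_sub_right, inner_add_left, inner_add_right,
      real_inner_smul_left, real_inner_smul_right]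
    simp only [real_inner_comm u z, real_inner_comm v z, real_inner_comm u v,
      real_inner_self_eq_norm_sq, hu, hv, hz, ← hγdef, ← hαdef, ← hβdef]
    ring
  rw [hexp] at h0
  nlinarith [h0, hγ]

/-- Key algebraic lemma: lower bound for the sum of the two distances to a
boundary point, in the symmetric configuration. -/
lemma key_sum_lower (h s α β a b : ℝ) (hs : 0 < s) (hhs : h^2 + s^2 = 1)
    (hG : 0 ≤ 1 - (2*h^2-1)^2 - α^2 - β^2 + 2*α*β*(2*h^2-1))
    (ha : 0 ≤ a) (hb : 0 ≤ b)
    (ha2 : a^2 = 1 + h^2 - 2*h*α) (hb2 : b^2 = 1 + h^2 - 2*h*β) :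
    2*s ≤ a + b := by
  have hQ : (1-3*h^2+h*(α+β))^2 ≤ a^2*b^2 := by
    nlinarith [hG, mul_nonneg (sq_nonneg s) (sq_nonneg (α+β-2*h))]
  have hab : 1-3*h^2+h*(α+β) ≤ a*b := by nlinarith [hQ, mul_nonneg ha hb]
  nlinarith [hab, hs, ha, hb, sq_nonneg (a+b-2*s)]

/-- For unit vectors `u', v'` at angle `μ ∈ (0, π)` and `x = cos(μ/2) u'`,
`y = cos(μ/2) v'`, one has `|x−y| = sin μ` and
`s_{Bⁿ}(x,y) ≤ cos(μ/2) < |x−y|/√(|x−y|² + 4(1−cos(μ/2))²) = p_{Bⁿ}(x,y)`. -/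
theorem s_lt_p_symmetric_config (n : ℕ) (u' v' : EuclideanSpace ℝ (Fin n))
    (hu : ‖u'‖ = 1) (hv : ‖v'‖ = 1) (μ : ℝ)
    (hμ : InnerProductGeometry.angle u' v' = μ) (hμ0 : 0 < μ) (hμπ : μ < Real.pi)
    (x y : EuclideanSpace ℝ (Fin n))
    (hx : x = Real.cos (μ / 2) • u') (hy : y = Real.cos (μ / 2) • v') :
    dist x y = Real.sin μ ∧
    sG (Metric.ball (0 : EuclideanSpace ℝ (Fin n)) 1) x y ≤ Real.cos (μ / 2) ∧
    Real.cos (μ / 2)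
      < dist x y / Real.sqrt (dist x y ^ 2 + 4 * (1 - Real.cos (μ / 2)) ^ 2) ∧
    dist x y / Real.sqrt (dist x y ^ 2 + 4 * (1 - Real.cos (μ / 2)) ^ 2)
      = pG (Metric.ball (0 : EuclideanSpace ℝ (Fin n)) 1) x y := by
  have hπ := Real.pi_pos
  set h := Real.cos (μ / 2) with hhdef
  set s := Real.sin (μ / 2) with hsdef
  have hh : 0 < h := Real.cos_pos_of_mem_Ioo ⟨by linarith, by linarith⟩
  have hs : 0 < s := Real.sin_pos_of_pos_of_lt_pi (by linarith) (by linarith)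
  have hhs : h^2 + s^2 = 1 := by
    rw [hhdef, hsdef]; exact Real.cos_sq_add_sin_sq _
  have h1 : h < 1 := by nlinarith [hhs, hs, hh, mul_pos hs hs]
  have h1h : 0 < 1 - h := by linarith
  -- inner product of the unit vectors
  have hcos : Real.cos μ = 2*h^2 - 1 := by
    rw [show μ = 2 * (μ/2) by ring, Real.cos_two_mul]
  have hγ : ⟪u', v'⟫ = 2*h^2 - 1 := by
    have hc := InnerProductGeometry.cos_angle u' v'
    rw [hμ, hu, hv, mul_one, div_one] at hc
    rw [← hc]; exact hcos
  -- |x - y| = sin μ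
  have hsinμ : Real.sin μ = 2*s*h := by
    rw [show μ = 2 * (μ/2) by ring, Real.sin_two_mul]
  have hxy : dist x y = Real.sin μ := by
    have hns : ‖u' - v'‖ = 2*s := by
      have hsq : ‖u' - v'‖^2 = (2*s)^2 := by
        rw [norm_sub_sq_real, hu, hv, hγ]; nlinarith [hhs]
      calc ‖u' - v'‖ = Real.sqrt (‖u' - v'‖^2) := (Real.sqrt_sq (norm_nonneg _)).symm
        _ = Real.sqrt ((2*s)^2) := by rw [hsq]
        _ = 2*s := Real.sqrt_sq (by positivity)
    rw [hx, hy, dist_eq_norm, ← smul_sub, norm_smul, Real.norm_eq_abs,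
      abs_of_nonneg hh.le, hns, hsinμ]
    ring
  have hxy2 : dist x y = 2*s*h := by rw [hxy, hsinμ]
  -- nontriviality / nonempty sphere
  have hu0 : u' ≠ 0 := by intro h0; rw [h0, norm_zero] at hu; norm_num at hu
  have : Nontrivial (EuclideanSpace ℝ (Fin n)) := nontrivial_of_ne u' 0 hu0
  have hfr : frontier (Metric.ball (0 : EuclideanSpace ℝ (Fin n)) 1)
      = sphere (0 : EuclideanSpace ℝ (Fin n)) 1 := frontier_ball 0 one_ne_zero
  have hsne : (sphere (0 : EuclideanSpace ℝ (Fin n)) 1).Nonempty :=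
    NormedSpace.sphere_nonempty.mpr zero_le_one
  have hne : Nonempty ↥(frontier (Metric.ball (0 : EuclideanSpace ℝ (Fin n)) 1)) := by
    rw [hfr]; exact hsne.to_subtype
  -- lower bound for the infimum over the boundary
  set I := ⨅ z : frontier (Metric.ball (0 : EuclideanSpace ℝ (Fin n)) 1),
      (dist x (z : EuclideanSpace ℝ (Fin n)) + dist (z : EuclideanSpace ℝ (Fin n)) y) with hIdef
  have hinf : 2*s ≤ I := by
    apply le_ciInf
    intro z
    have hzmem : (z : EuclideanSpace ℝ (Fin n)) ∈ sphere (0 : EuclideanSpace ℝ (Fin n)) 1 := by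
      rw [← hfr]; exact z.2
    have hz1 : ‖(z : EuclideanSpace ℝ (Fin n))‖ = 1 := by
      simpa using mem_sphere_zero_iff_norm.mp hzmem
    have hsq1 : h^2 < 1 := by nlinarith [mul_pos hs hs]
    have hγ2 : (⟪u', v'⟫)^2 < 1 := by
      rw [hγ]
      nlinarith [mul_pos hh hh, hsq1, mul_pos (mul_pos hh hh) (show (0:ℝ) < 1 - h^2 by linarith)]
    have hG := gram_det_nonneg' u' v' (z : EuclideanSpace ℝ (Fin n)) hu hv hz1 hγ2
    rw [hγ] at hG
    have hA : (dist x (z : EuclideanSpace ℝ (Fin n)))^2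
        = 1 + h^2 - 2*h*⟪u', (z : EuclideanSpace ℝ (Fin n))⟫ := by
      rw [dist_eq_norm, hx, norm_sub_sq_real, norm_smul, Real.norm_eq_abs,
        abs_of_nonneg hh.le, real_inner_smul_left, hu, hz1]
      ring
    have hB : (dist (z : EuclideanSpace ℝ (Fin n)) y)^2
        = 1 + h^2 - 2*h*⟪v', (z : EuclideanSpace ℝ (Fin n))⟫ := by
      rw [dist_eq_norm, ← norm_neg, neg_sub, hy, norm_sub_sq_real, norm_smul,
        Real.norm_eq_abs, abs_of_nonneg hh.le, real_inner_smul_left, hv, hz1]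
      ring
    exact key_sum_lower h s _ _ _ _ hs hhs hG dist_nonneg dist_nonneg hA hB
  -- s_G bound
  have hIpos : 0 < I := by linarith
  have hsG : sG (Metric.ball (0 : EuclideanSpace ℝ (Fin n)) 1) x y ≤ h := by
    rw [sG, ← hIdef, div_le_iff₀ hIpos]
    calc dist x y = h * (2*s) := by rw [hxy2]; ring
      _ ≤ h * I := mul_le_mul_of_nonneg_left hinf hh.le
  -- strict inequality for p
  have hEpos : 0 < dist x y ^ 2 + 4 * (1 - h) ^ 2 := by
    have h4 : (0:ℝ) < 4 * (1-h)^2 := by positivity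
    linarith [sq_nonneg (dist x y), h4]
  have hsqrtpos : 0 < Real.sqrt (dist x y ^ 2 + 4 * (1 - h) ^ 2) := Real.sqrt_pos.mpr hEpos
  have hstrict : h < dist x y / Real.sqrt (dist x y ^ 2 + 4 * (1 - h) ^ 2) := by
    rw [lt_div_iff₀ hsqrtpos]
    have hpos : 0 < h^2*(1-h)^2*(2*h+h^2) :=
      mul_pos (mul_pos (pow_pos hh 2) (pow_pos h1h 2)) (by nlinarith)
    have hkey : h^2 * (dist x y ^ 2 + 4 * (1 - h) ^ 2) < dist x y ^ 2 := by
      rw [hxy2]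
      have hs2 : s^2 = 1 - h^2 := by linarith
      have e1 : s^2*h^2 = (1-h^2)*h^2 := by rw [hs2]
      have e2 : s^2*h^4 = (1-h^2)*h^4 := by rw [hs2]
      nlinarith [hpos, e1, e2]
    calc h * Real.sqrt (dist x y ^ 2 + 4 * (1 - h) ^ 2)
        = Real.sqrt (h^2 * (dist x y ^ 2 + 4 * (1 - h) ^ 2)) := by
          rw [Real.sqrt_mul (sq_nonneg h), Real.sqrt_sq hh.le]
      _ < Real.sqrt (dist x y ^ 2) := Real.sqrt_lt_sqrt (by positivity) hkey
      _ = dist x y := Real.sqrt_sq dist_nonneg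
  -- the boundary distances
  have hdist_aux : ∀ w : EuclideanSpace ℝ (Fin n), ‖w‖ = 1 →
      Metric.infDist (h • w) (sphere (0 : EuclideanSpace ℝ (Fin n)) 1) = 1 - h := by
    intro w hw
    apply le_antisymm
    · have hmem : w ∈ sphere (0 : EuclideanSpace ℝ (Fin n)) 1 := by
        simpa [mem_sphere_zero_iff_norm] using hw
      have hd : dist (h • w) w = 1 - h := by
        have hsub : h • w - w = (h-1) • w := by rw [sub_smul, one_smul]
        rw [dist_eq_norm, hsub, norm_smul, Real.norm_eq_abs, hw, mul_one,
          abs_of_nonpos (by linarith), neg_sub]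
      calc Metric.infDist (h • w) (sphere (0 : EuclideanSpace ℝ (Fin n)) 1)
          ≤ dist (h • w) w := Metric.infDist_le_dist_of_mem hmem
        _ = 1 - h := hd
    · by_contra hcon
      push_neg at hcon
      obtain ⟨z, hzs, hzd⟩ := (Metric.infDist_lt_iff hsne).mp hcon
      have hz1 : ‖z‖ = 1 := by simpa [mem_sphere_zero_iff_norm] using hzs
      have hhw : ‖h • w‖ = h := by
        rw [norm_smul, Real.norm_eq_abs, abs_of_nonneg hh.le, hw, mul_one]
      have hlb : (1:ℝ) - h ≤ dist (h • w) z := by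
        have h1' : ‖z‖ - ‖h • w‖ ≤ ‖z - h • w‖ := norm_sub_norm_le _ _
        rw [hz1, hhw] at h1'
        rw [dist_eq_norm, ← norm_neg, neg_sub]
        exact h1'
      linarith
  have hdGx : dG (Metric.ball (0 : EuclideanSpace ℝ (Fin n)) 1) x = 1 - h := by
    rw [dG, hfr, hx]; exact hdist_aux u' hu
  have hdGy : dG (Metric.ball (0 : EuclideanSpace ℝ (Fin n)) 1) y = 1 - h := by
    rw [dG, hfr, hy]; exact hdist_aux v' hv
  have hpG : dist x y / Real.sqrt (dist x y ^ 2 + 4 * (1 - h) ^ 2)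
      = pG (Metric.ball (0 : EuclideanSpace ℝ (Fin n)) 1) x y := by
    rw [pG, hdGx, hdGy, show (4:ℝ) * (1-h) * (1-h) = 4 * (1-h)^2 by ring]
  exact ⟨hxy, hsG, hstrict, hpG⟩
end
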